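/- Let N ≥ 1 and fix a ∈ ℂ^N. For the modified midpoint mass-preserving scheme (with Dirichlet conventions a_0 = a_{N+1} = b_0 = b_{N+1} = 0), there exists Δt₁ > 0, depending only on the ℓ² norm ‖a‖₂, such that for all 0 < Δt ≤ Δt₁ the nonlinear algebraic system b_j = a_j + Δt·( −i·((|a_j|² + |b_j|²)/2)·m_j + 2i \bar{m_j}( m_{j+1}² + m_{j−1}² ) ), m_j = (a_j + b_j)/2, j = 1,…,N, has a solution b ∈ ℂ^N, this solution is locally unique, and the map Δt ↦ b(Δt) is continuously differentiable on [0, Δt₁] with b(0) = a. -/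

import Mathlib

noncomputable section

open Complex Topology Filter

/-- The discrete ℓ² norm of a vector in ℂ^N (indices 1,…,N). -/
noncomputable def l2norm (N : ℕ) (c : ℕ → ℂ) : ℝ :=
  Real.sqrt (∑ j ∈ Finset.Icc 1 N, Complex.normSq (c j))

/-- The modified midpoint (mass-preserving) scheme relating `a = bₙ` to
`b = bₙ₊₁` with time step `Δt`, with `m j = (a j + b j)/2`. -/
def massScheme (N : ℕ) (Δt : ℝ) (a b : ℕ → ℂ) : Prop :=
  ∀ j ∈ Finset.Icc 1 N,
    b j = a j + (Δt : ℂ) *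
      (-Complex.I * ((((Complex.normSq (a j) + Complex.normSq (b j)) / 2 : ℝ) : ℂ))
          * ((a j + b j) / 2)
        + 2 * Complex.I * (starRingEnd ℂ) ((a j + b j) / 2)
          * (((a (j + 1) + b (j + 1)) / 2) ^ 2 + ((a (j - 1) + b (j - 1)) / 2) ^ 2))

/-- extension of a finite vector to `ℕ` with Dirichlet zeros. -/
def extv (N : ℕ) (v : Fin N → ℂ) : ℕ → ℂ :=
  fun j => if h : 1 ≤ j ∧ j ≤ N then v ⟨j - 1, by omega⟩ else 0

/-- one component of the nonlinearity. -/
def Tcomp (a₀ a₁ a₂ p₀ p₁ p₂ : ℂ) : ℂ :=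
  -Complex.I * ((((Complex.normSq a₁ + Complex.normSq p₁) / 2 : ℝ) : ℂ)) * ((a₁ + p₁) / 2)
  + 2 * Complex.I * (starRingEnd ℂ) ((a₁ + p₁) / 2)
    * (((a₂ + p₂) / 2) ^ 2 + ((a₀ + p₀) / 2) ^ 2)

/-- the full nonlinearity. -/
def Fmap (N : ℕ) (a : ℕ → ℂ) (v : Fin N → ℂ) : Fin N → ℂ :=
  fun i => Tcomp (a (i : ℕ)) (a ((i : ℕ) + 1)) (a ((i : ℕ) + 2))
    (extv N v (i : ℕ)) (extv N v ((i : ℕ) + 1)) (extv N v ((i : ℕ) + 2))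

lemma normSq_eq_sq (z : ℂ) : Complex.normSq z = ‖z‖ ^ 2 := by
  rw [Complex.normSq_eq_norm_sq]

lemma norm_mul_sub_mul (x y z w : ℂ) : ‖x * z - y * w‖ ≤ ‖x‖ * ‖z - w‖ + ‖x - y‖ * ‖w‖ := by
  have h : x * z - y * w = x * (z - w) + (x - y) * w := by ring
  rw [h]
  exact (norm_add_le _ _).trans (by rw [norm_mul, norm_mul])

lemma norm_half_le {x y : ℂ} {ρ : ℝ} (hx : ‖x‖ ≤ ρ) (hy : ‖y‖ ≤ ρ) : ‖(x + y) / 2‖ ≤ ρ := by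
  rw [norm_div]
  have h2 : ‖(2 : ℂ)‖ = 2 := by norm_num
  rw [h2, div_le_iff₀ (by norm_num : (0:ℝ) < 2)]
  calc ‖x + y‖ ≤ ‖x‖ + ‖y‖ := norm_add_le _ _
    _ ≤ ρ * 2 := by linarith

lemma Tcomp_norm_le (ρ : ℝ) (a₀ a₁ a₂ p₀ p₁ p₂ : ℂ)
    (ha₀ : ‖a₀‖ ≤ ρ) (ha₁ : ‖a₁‖ ≤ ρ) (ha₂ : ‖a₂‖ ≤ ρ)
    (hp₀ : ‖p₀‖ ≤ ρ) (hp₁ : ‖p₁‖ ≤ ρ) (hp₂ : ‖p₂‖ ≤ ρ) :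
    ‖Tcomp a₀ a₁ a₂ p₀ p₁ p₂‖ ≤ 5 * ρ ^ 3 := by
  have hρ : 0 ≤ ρ := le_trans (norm_nonneg _) ha₀
  have hm0 := norm_half_le ha₀ hp₀
  have hm1 := norm_half_le ha₁ hp₁
  have hm2 := norm_half_le ha₂ hp₂
  have hc : ‖((((Complex.normSq a₁ + Complex.normSq p₁) / 2 : ℝ)) : ℂ)‖ ≤ ρ ^ 2 := by
    rw [Complex.norm_real, Real.norm_of_nonneg (div_nonneg (add_nonneg (Complex.normSq_nonneg _) (Complex.normSq_nonneg _)) (by norm_num))]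
    rw [normSq_eq_sq, normSq_eq_sq]
    nlinarith [norm_nonneg a₁, norm_nonneg p₁]
  have hS : ‖((a₂ + p₂) / 2) ^ 2 + ((a₀ + p₀) / 2) ^ 2‖ ≤ 2 * ρ ^ 2 := by
    calc ‖((a₂ + p₂) / 2) ^ 2 + ((a₀ + p₀) / 2) ^ 2‖
        ≤ ‖((a₂ + p₂) / 2) ^ 2‖ + ‖((a₀ + p₀) / 2) ^ 2‖ := norm_add_le _ _
      _ = ‖(a₂ + p₂) / 2‖ ^ 2 + ‖(a₀ + p₀) / 2‖ ^ 2 := by rw [norm_pow, norm_pow]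
      _ ≤ ρ ^ 2 + ρ ^ 2 := add_le_add (pow_le_pow_left₀ (norm_nonneg _) hm2 2) (pow_le_pow_left₀ (norm_nonneg _) hm0 2)
      _ = 2 * ρ ^ 2 := by ring
  calc ‖Tcomp a₀ a₁ a₂ p₀ p₁ p₂‖
      ≤ ‖-Complex.I * ((((Complex.normSq a₁ + Complex.normSq p₁) / 2 : ℝ)) : ℂ) * ((a₁ + p₁) / 2)‖
        + ‖2 * Complex.I * (starRingEnd ℂ) ((a₁ + p₁) / 2)
            * (((a₂ + p₂) / 2) ^ 2 + ((a₀ + p₀) / 2) ^ 2)‖ := norm_add_le _ _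
    _ ≤ ρ ^ 2 * ρ + 2 * ρ * (2 * ρ ^ 2) := by
        have e1 : ‖-Complex.I * ((((Complex.normSq a₁ + Complex.normSq p₁) / 2 : ℝ)) : ℂ)
            * ((a₁ + p₁) / 2)‖ = ‖((((Complex.normSq a₁ + Complex.normSq p₁) / 2 : ℝ)) : ℂ)‖
            * ‖(a₁ + p₁) / 2‖ := by simp
        have e2 : ‖2 * Complex.I * (starRingEnd ℂ) ((a₁ + p₁) / 2)
            * (((a₂ + p₂) / 2) ^ 2 + ((a₀ + p₀) / 2) ^ 2)‖
            = 2 * (‖(a₁ + p₁) / 2‖ * ‖((a₂ + p₂) / 2) ^ 2 + ((a₀ + p₀) / 2) ^ 2‖) := by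
          rw [show 2 * Complex.I * (starRingEnd ℂ) ((a₁ + p₁) / 2)
              * (((a₂ + p₂) / 2) ^ 2 + ((a₀ + p₀) / 2) ^ 2)
              = (2 * Complex.I) * ((starRingEnd ℂ) ((a₁ + p₁) / 2)
              * (((a₂ + p₂) / 2) ^ 2 + ((a₀ + p₀) / 2) ^ 2)) from by ring, norm_mul, norm_mul]
          rw [starRingEnd_apply, norm_mul, norm_star]
          norm_num
        rw [e1, e2]
        nlinarith [norm_nonneg ((a₁ + p₁) / 2), norm_nonneg (((a₂ + p₂) / 2) ^ 2 + ((a₀ + p₀) / 2) ^ 2), norm_nonneg ((((Complex.normSq a₁ + Complex.normSq p₁) / 2 : ℝ)) : ℂ)]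
    _ = 5 * ρ ^ 3 := by ring

lemma lip_core (X Y M1 N1 C D S T : ℂ) (ρ e : ℝ)
    (hρ : 0 ≤ ρ) (he : 0 ≤ e)
    (hXb : ‖X‖ ≤ ρ^2) (hXY : ‖X - Y‖ ≤ ρ*e) (hM : ‖M1 - N1‖ ≤ e/2) (hN1 : ‖N1‖ ≤ ρ)
    (hC : ‖C‖ ≤ ρ) (hCD : ‖C - D‖ ≤ e/2) (hS : ‖S - T‖ ≤ 2*ρ*e) (hT : ‖T‖ ≤ 2*ρ^2) :
    ‖-Complex.I * (X * M1 - Y * N1) + 2*Complex.I*(C * S - D * T)‖ ≤ 8 * ρ^2 * e := by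
  have e1 : ‖-Complex.I * (X * M1 - Y * N1)‖ = ‖X * M1 - Y * N1‖ := by simp
  have e2 : ‖2*Complex.I*(C * S - D * T)‖ = 2 * ‖C * S - D * T‖ := by simp [norm_mul]
  have h1 := norm_mul_sub_mul X Y M1 N1
  have h2 := norm_mul_sub_mul C D S T
  have m1 : ‖X‖ * ‖M1 - N1‖ ≤ ρ^2 * (e/2) :=
    mul_le_mul hXb hM (norm_nonneg _) (by positivity)
  have m2 : ‖X - Y‖ * ‖N1‖ ≤ (ρ*e) * ρ :=
    mul_le_mul hXY hN1 (norm_nonneg _) (by positivity)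
  have m3 : ‖C‖ * ‖S - T‖ ≤ ρ * (2*ρ*e) :=
    mul_le_mul hC hS (norm_nonneg _) hρ
  have m4 : ‖C - D‖ * ‖T‖ ≤ (e/2) * (2*ρ^2) :=
    mul_le_mul hCD hT (norm_nonneg _) (by positivity)
  calc ‖-Complex.I * (X * M1 - Y * N1) + 2*Complex.I*(C * S - D * T)‖
      ≤ ‖-Complex.I * (X * M1 - Y * N1)‖ + ‖2*Complex.I*(C * S - D * T)‖ := norm_add_le _ _
    _ = ‖X * M1 - Y * N1‖ + 2 * ‖C * S - D * T‖ := by rw [e1, e2]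
    _ ≤ 8 * ρ^2 * e := by nlinarith

lemma Tcomp_lip (ρ e : ℝ) (a₀ a₁ a₂ p₀ p₁ p₂ q₀ q₁ q₂ : ℂ)
    (ha₀ : ‖a₀‖ ≤ ρ) (ha₁ : ‖a₁‖ ≤ ρ) (ha₂ : ‖a₂‖ ≤ ρ)
    (hp₀ : ‖p₀‖ ≤ ρ) (hp₁ : ‖p₁‖ ≤ ρ) (hp₂ : ‖p₂‖ ≤ ρ)
    (hq₀ : ‖q₀‖ ≤ ρ) (hq₁ : ‖q₁‖ ≤ ρ) (hq₂ : ‖q₂‖ ≤ ρ)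
    (hd₀ : ‖p₀ - q₀‖ ≤ e) (hd₁ : ‖p₁ - q₁‖ ≤ e) (hd₂ : ‖p₂ - q₂‖ ≤ e) :
    ‖Tcomp a₀ a₁ a₂ p₀ p₁ p₂ - Tcomp a₀ a₁ a₂ q₀ q₁ q₂‖ ≤ 8 * ρ ^ 2 * e := by
  have hρ : 0 ≤ ρ := le_trans (norm_nonneg _) ha₀
  have he : 0 ≤ e := le_trans (norm_nonneg _) hd₀
  have hdM : ∀ x y z : ℂ, ‖y - z‖ ≤ e → ‖(x + y)/2 - (x + z)/2‖ ≤ e/2 := by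
    intro x y z h
    rw [show (x + y)/2 - (x + z)/2 = (y - z)/2 from by ring, norm_div]
    have h2 : ‖(2 : ℂ)‖ = 2 := by norm_num
    rw [h2]
    linarith
  have hdec : Tcomp a₀ a₁ a₂ p₀ p₁ p₂ - Tcomp a₀ a₁ a₂ q₀ q₁ q₂
      = -Complex.I * ((((((Complex.normSq a₁ + Complex.normSq p₁) / 2 : ℝ)) : ℂ)) * ((a₁ + p₁)/2)
          - (((((Complex.normSq a₁ + Complex.normSq q₁) / 2 : ℝ)) : ℂ)) * ((a₁ + q₁)/2))
        + 2*Complex.I*((starRingEnd ℂ) ((a₁ + p₁)/2) * (((a₂ + p₂)/2)^2 + ((a₀ + p₀)/2)^2)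
          - (starRingEnd ℂ) ((a₁ + q₁)/2) * (((a₂ + q₂)/2)^2 + ((a₀ + q₀)/2)^2)) := by
    simp only [Tcomp]; ring
  rw [hdec]
  apply lip_core _ _ _ _ _ _ _ _ ρ e hρ he
  · -- ‖X‖ ≤ ρ^2
    rw [Complex.norm_real, Real.norm_of_nonneg (div_nonneg (add_nonneg (Complex.normSq_nonneg _)
      (Complex.normSq_nonneg _)) (by norm_num))]
    rw [normSq_eq_sq, normSq_eq_sq]
    nlinarith [norm_nonneg a₁, norm_nonneg p₁]
  · -- ‖X - Y‖ ≤ ρ * e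
    rw [← Complex.ofReal_sub, Complex.norm_real, Real.norm_eq_abs]
    have h1 : |‖p₁‖ - ‖q₁‖| ≤ e := le_trans (abs_norm_sub_norm_le p₁ q₁) hd₁
    rw [show (Complex.normSq a₁ + Complex.normSq p₁)/2 - (Complex.normSq a₁ + Complex.normSq q₁)/2
        = (‖p₁‖^2 - ‖q₁‖^2)/2 from by simp only [normSq_eq_sq]; ring]
    rw [abs_le] at h1 ⊢
    constructor <;> nlinarith [norm_nonneg p₁, norm_nonneg q₁]
  · exact hdM a₁ p₁ q₁ hd₁
  · exact norm_half_le ha₁ hq₁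
  · rw [starRingEnd_apply, norm_star]; exact norm_half_le ha₁ hp₁
  · rw [← map_sub, starRingEnd_apply, norm_star]; exact hdM a₁ p₁ q₁ hd₁
  · -- ‖Sp - Sq‖ ≤ 2 ρ e
    have hsq : ∀ x y z w : ℂ, ‖x‖ ≤ ρ → ‖y‖ ≤ ρ → ‖x - y‖ ≤ e/2 → ‖x^2 - y^2‖ ≤ ρ * e := by
      intro x y z w hx hy hxy
      rw [show x^2 - y^2 = (x + y) * (x - y) from by ring, norm_mul]
      calc ‖x + y‖ * ‖x - y‖ ≤ (ρ + ρ) * (e/2) :=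
        mul_le_mul (le_trans (norm_add_le _ _) (by linarith)) hxy (norm_nonneg _) (by linarith)
        _ = ρ * e := by ring
    have h2 := hsq ((a₂ + p₂)/2) ((a₂ + q₂)/2) 0 0 (norm_half_le ha₂ hp₂) (norm_half_le ha₂ hq₂)
      (hdM a₂ p₂ q₂ hd₂)
    have h0 := hsq ((a₀ + p₀)/2) ((a₀ + q₀)/2) 0 0 (norm_half_le ha₀ hp₀) (norm_half_le ha₀ hq₀)
      (hdM a₀ p₀ q₀ hd₀)
    calc ‖(((a₂ + p₂)/2)^2 + ((a₀ + p₀)/2)^2) - (((a₂ + q₂)/2)^2 + ((a₀ + q₀)/2)^2)‖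
        = ‖(((a₂ + p₂)/2)^2 - ((a₂ + q₂)/2)^2) + (((a₀ + p₀)/2)^2 - ((a₀ + q₀)/2)^2)‖ := by
          ring_nf
      _ ≤ ‖((a₂ + p₂)/2)^2 - ((a₂ + q₂)/2)^2‖ + ‖((a₀ + p₀)/2)^2 - ((a₀ + q₀)/2)^2‖ :=
          norm_add_le _ _
      _ ≤ ρ * e + ρ * e := add_le_add h2 h0
      _ = 2 * ρ * e := by ring
  · -- ‖Sq‖ ≤ 2 ρ^2
    calc ‖((a₂ + q₂)/2)^2 + ((a₀ + q₀)/2)^2‖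
        ≤ ‖((a₂ + q₂)/2)^2‖ + ‖((a₀ + q₀)/2)^2‖ := norm_add_le _ _
      _ = ‖(a₂ + q₂)/2‖^2 + ‖(a₀ + q₀)/2‖^2 := by rw [norm_pow, norm_pow]
      _ ≤ ρ^2 + ρ^2 := add_le_add (pow_le_pow_left₀ (norm_nonneg _) (norm_half_le ha₂ hq₂) 2)
          (pow_le_pow_left₀ (norm_nonneg _) (norm_half_le ha₀ hq₀) 2)
      _ = 2 * ρ^2 := by ring

lemma contDiff_extv (N : ℕ) (k : ℕ) : ContDiff ℝ 1 (fun v : Fin N → ℂ => extv N v k) := by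
  by_cases h : 1 ≤ k ∧ k ≤ N
  · simp only [extv, dif_pos h]
    exact (ContinuousLinearMap.proj (R := ℝ) (φ := fun _ : Fin N => ℂ) ⟨k-1, by omega⟩).contDiff
  · simp only [extv, dif_neg h]; exact contDiff_const

lemma contDiff_normSqC : ContDiff ℝ 1 (fun z : ℂ => ((Complex.normSq z : ℝ) : ℂ)) := by
  have h : (fun z : ℂ => ((Complex.normSq z : ℝ) : ℂ))
      = fun z : ℂ => ((z.re * z.re + z.im * z.im : ℝ) : ℂ) := by
    funext z; rw [Complex.normSq_apply]
  rw [h]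
  exact Complex.ofRealCLM.contDiff.comp ((Complex.reCLM.contDiff.mul Complex.reCLM.contDiff).add
    (Complex.imCLM.contDiff.mul Complex.imCLM.contDiff))

lemma contDiff_conj : ContDiff ℝ 1 (fun z : ℂ => (starRingEnd ℂ) z) :=
  Complex.conjCLE.contDiff

lemma contDiff_Fmap (N : ℕ) (a : ℕ → ℂ) : ContDiff ℝ 1 (Fmap N a) := by
  rw [contDiff_pi]
  intro i
  have hmid : ∀ (c : ℂ) (k : ℕ), ContDiff ℝ 1 (fun v : Fin N → ℂ => (c + extv N v k) / 2) :=
    fun c k => (contDiff_const.add (contDiff_extv N k)).div_const _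
  have hcast : ∀ (c : ℝ) (k : ℕ), ContDiff ℝ 1
      (fun v : Fin N → ℂ => (((c + Complex.normSq (extv N v k)) / 2 : ℝ) : ℂ)) := by
    intro c k
    have h : (fun v : Fin N → ℂ => (((c + Complex.normSq (extv N v k)) / 2 : ℝ) : ℂ))
        = fun v => (((c : ℂ) + ((Complex.normSq (extv N v k) : ℝ) : ℂ)) / 2) := by
      funext v; push_cast; ring
    rw [h]
    exact (contDiff_const.add (contDiff_normSqC.comp (contDiff_extv N k))).div_const _
  simp only [Fmap, Tcomp]
  exact ((contDiff_const.mul (hcast _ _)).mul (hmid _ _)).add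
    ((contDiff_const.mul (contDiff_conj.comp (hmid _ _))).mul
      (((hmid _ _).pow 2).add ((hmid _ _).pow 2)))

set_option maxHeartbeats 2000000 in
/-- Solvability of the modified midpoint (mass-preserving) scheme:
there is a threshold `δ`, depending only on the ℓ² norm of `a`, such that for
all `0 ≤ Δt ≤ δ ‖a‖₂` the scheme has a solution `B Δt`, locally unique,
with `Δt ↦ B Δt` continuously differentiable and `B 0 = a`. -/
theorem mass_scheme_solvability (N : ℕ) (hN : 1 ≤ N) :
    ∃ δ : ℝ → ℝ, (∀ r : ℝ, 0 < δ r) ∧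
      ∀ a : ℕ → ℂ, a 0 = 0 → a (N + 1) = 0 →
        ∃ B : ℝ → ℕ → ℂ,
          (∀ dt : ℝ, B dt 0 = 0 ∧ B dt (N + 1) = 0) ∧
          (∀ j, B 0 j = a j) ∧
          (∀ j ∈ Finset.Icc 1 N,
            ContDiffOn ℝ 1 (fun dt : ℝ => B dt j) (Set.Icc 0 (δ (l2norm N a)))) ∧
          (∀ dt ∈ Set.Icc (0 : ℝ) (δ (l2norm N a)), massScheme N dt a (B dt)) ∧
          (∀ dt ∈ Set.Icc (0 : ℝ) (δ (l2norm N a)), ∃ ε > (0 : ℝ), ∀ b' : ℕ → ℂ,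
            b' 0 = 0 → b' (N + 1) = 0 → massScheme N dt a b' →
            l2norm N (b' - B dt) < ε → ∀ j ∈ Finset.Icc 1 N, b' j = B dt j) := by
  classical
  refine ⟨fun r => 1 / (16 * (max r 0 + 1) ^ 3), fun r => by positivity, ?_⟩
  intro a ha0 haN
  beta_reduce
  set r : ℝ := l2norm N a with hrdef
  set ρ : ℝ := max r 0 + 1 with hρdef
  have hρ1 : (1:ℝ) ≤ ρ := by rw [hρdef]; have := le_max_right r 0; linarith
  have hρ0 : (0:ℝ) < ρ := by linarith
  set δv : ℝ := 1 / (16 * ρ ^ 3) with hδdef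
  have hδpos : 0 < δv := by rw [hδdef]; positivity
  have hδρ : δv * (16 * ρ ^ 3) = 1 := by rw [hδdef]; field_simp
  -- coordinatewise bound by the ℓ² norm
  have hrρ' : r + 1 ≤ ρ := by rw [hρdef]; have := le_max_left r 0; linarith
  clear_value δv ρ
  have hl2 : ∀ (c : ℕ → ℂ) (j : ℕ), 1 ≤ j → j ≤ N → ‖c j‖ ≤ l2norm N c := by
    intro c j h1 h2
    have h3 : ‖c j‖ = Real.sqrt (Complex.normSq (c j)) := by
      rw [Complex.norm_def]
    rw [h3, l2norm]
    apply Real.sqrt_le_sqrt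
    exact Finset.single_le_sum (fun k _ => Complex.normSq_nonneg (c k)) (Finset.mem_Icc.2 ⟨h1, h2⟩)
  have hr0 : 0 ≤ r := Real.sqrt_nonneg _
  have hrρ : r + 1 ≤ ρ := hrρ'
  have haj : ∀ k : ℕ, k ≤ N + 1 → ‖a k‖ ≤ r := by
    intro k hk
    rcases Nat.eq_zero_or_pos k with h | h
    · rw [h, ha0, norm_zero]; exact hr0
    · rcases eq_or_lt_of_le hk with h' | h'
      · rw [h', haN, norm_zero]; exact hr0
      · exact hl2 a k h (by omega)
  set A : Fin N → ℂ := fun i => a ((i : ℕ) + 1) with hA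
  have hAb : ∀ i : Fin N, ‖A i‖ ≤ r := by
    intro i; have hi := i.2
    rw [hA]; exact haj _ (by omega)
  set cB : Set (Fin N → ℂ) := Metric.closedBall A 1 with hcB
  have hextb : ∀ v ∈ cB, ∀ k, ‖extv N v k‖ ≤ ρ := by
    intro v hv k
    by_cases h : 1 ≤ k ∧ k ≤ N
    · simp only [extv, dif_pos h]
      have h1 : ‖v ⟨k-1, by omega⟩ - A ⟨k-1, by omega⟩‖ ≤ 1 := by
        calc ‖v ⟨k-1, by omega⟩ - A ⟨k-1, by omega⟩‖ = ‖(v - A) ⟨k-1, by omega⟩‖ := by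
              rw [Pi.sub_apply]
          _ ≤ ‖v - A‖ := norm_le_pi_norm _ _
          _ ≤ 1 := by rw [hcB, Metric.mem_closedBall, dist_eq_norm] at hv; exact hv
      have h2 := hAb ⟨k-1, by omega⟩
      have h3 : ‖v ⟨k-1, by omega⟩‖ ≤ ‖v ⟨k-1, by omega⟩ - A ⟨k-1, by omega⟩‖
          + ‖A ⟨k-1, by omega⟩‖ := by
        have := norm_add_le (v ⟨k-1, by omega⟩ - A ⟨k-1, by omega⟩) (A ⟨k-1, by omega⟩)
        simpa using this
      linarith
    · simp only [extv, dif_neg h, norm_zero]; linarith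
  have hextd : ∀ (v w : Fin N → ℂ) (k : ℕ), ‖extv N v k - extv N w k‖ ≤ ‖v - w‖ := by
    intro v w k
    by_cases h : 1 ≤ k ∧ k ≤ N
    · simp only [extv, dif_pos h]
      rw [show v ⟨k-1, by omega⟩ - w ⟨k-1, by omega⟩ = (v - w) ⟨k-1, by omega⟩ from
        (Pi.sub_apply _ _ _).symm]
      exact norm_le_pi_norm _ _
    · simp only [extv, dif_neg h, sub_zero, norm_zero]; exact norm_nonneg _
  have hak : ∀ i : Fin N, ‖a (i:ℕ)‖ ≤ ρ ∧ ‖a ((i:ℕ)+1)‖ ≤ ρ ∧ ‖a ((i:ℕ)+2)‖ ≤ ρ := by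
    intro i; have hi := i.2
    refine ⟨le_trans (haj _ (by omega)) (by linarith),
           le_trans (haj _ (by omega)) (by linarith),
           le_trans (haj _ (by omega)) (by linarith)⟩
  have hFb : ∀ v ∈ cB, ‖Fmap N a v‖ ≤ 5 * ρ ^ 3 := by
    intro v hv
    rw [pi_norm_le_iff_of_nonneg (by nlinarith)]
    intro i
    obtain ⟨h1, h2, h3⟩ := hak i
    exact Tcomp_norm_le ρ _ _ _ _ _ _ h1 h2 h3 (hextb v hv _) (hextb v hv _) (hextb v hv _)
  have hFlip : ∀ v ∈ cB, ∀ w ∈ cB, ‖Fmap N a v - Fmap N a w‖ ≤ 8 * ρ ^ 2 * ‖v - w‖ := by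
    intro v hv w hw
    rw [pi_norm_le_iff_of_nonneg (by positivity)]
    intro i
    obtain ⟨h1, h2, h3⟩ := hak i
    rw [Pi.sub_apply]
    exact Tcomp_lip ρ ‖v - w‖ _ _ _ _ _ _ _ _ _ h1 h2 h3 (hextb v hv _) (hextb v hv _)
      (hextb v hv _) (hextb w hw _) (hextb w hw _) (hextb w hw _) (hextd v w _)
      (hextd v w _) (hextd v w _)
  have hmaps : ∀ t, t ∈ Set.Icc (0:ℝ) δv → ∀ v ∈ cB,
      A + t • Fmap N a v ∈ Metric.closedBall A (5/16 : ℝ) := by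
    intro t ht v hv
    rw [Metric.mem_closedBall, dist_eq_norm, add_sub_cancel_left, norm_smul, Real.norm_eq_abs,
      _root_.abs_of_nonneg ht.1]
    have h1 : t * ‖Fmap N a v‖ ≤ δv * (5 * ρ ^ 3) :=
      mul_le_mul ht.2 (hFb v hv) (norm_nonneg _) hδpos.le
    nlinarith [hδρ]
  have hsub : Metric.closedBall A (5/16 : ℝ) ⊆ cB := by
    rw [hcB]; exact Metric.closedBall_subset_closedBall (by norm_num)
  haveI : Nonempty cB := ⟨⟨A, Metric.mem_closedBall_self zero_le_one⟩⟩
  haveI : CompleteSpace cB := Metric.isClosed_closedBall.completeSpace_coe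
  have hcontr : ∀ t (ht : t ∈ Set.Icc (0:ℝ) δv), ContractingWith (1/2 : NNReal)
      (fun x : cB => (⟨A + t • Fmap N a x.1, hsub (hmaps t ht x.1 x.2)⟩ : cB)) := by
    intro t ht
    have hhalf : t * (8 * ρ ^ 2) ≤ 1/2 := by
      have h1 : t * (8*ρ^2) ≤ δv * (8*ρ^2) := mul_le_mul_of_nonneg_right ht.2 (by positivity)
      have h2 : ρ^2 ≤ ρ^3 := by nlinarith
      have h3 : (16*δv)*ρ^2 ≤ (16*δv)*ρ^3 := mul_le_mul_of_nonneg_left h2 (by linarith)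
      nlinarith [hδρ, h3]
    constructor
    · rw [← NNReal.coe_lt_coe]
      push_cast
      norm_num
    · apply LipschitzWith.of_dist_le_mul
      intro x y
      rw [Subtype.dist_eq, Subtype.dist_eq, dist_eq_norm, dist_eq_norm]
      dsimp only
      have he : (A + t • Fmap N a x.1) - (A + t • Fmap N a y.1)
          = t • (Fmap N a x.1 - Fmap N a y.1) := by
        rw [smul_sub]; abel
      rw [he, norm_smul, Real.norm_eq_abs, _root_.abs_of_nonneg ht.1]
      have h1 : t * ‖Fmap N a x.1 - Fmap N a y.1‖ ≤ t * (8 * ρ^2 * ‖x.1 - y.1‖) :=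
        mul_le_mul_of_nonneg_left (hFlip x.1 x.2 y.1 y.2) ht.1
      have h2 : t * (8 * ρ^2 * ‖x.1 - y.1‖) ≤ (1/2) * ‖x.1 - y.1‖ := by
        rw [show t * (8 * ρ^2 * ‖x.1 - y.1‖) = (t * (8 * ρ^2)) * ‖x.1 - y.1‖ from by ring]
        exact mul_le_mul_of_nonneg_right hhalf (norm_nonneg _)
      have h3 : ((1/2 : NNReal) : ℝ) = 1/2 := by push_cast; norm_num
      rw [h3]
      linarith
  set sol : ℝ → Fin N → ℂ := fun t =>
    if ht : t ∈ Set.Icc (0:ℝ) δv then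
      (ContractingWith.fixedPoint
        (fun x : cB => (⟨A + t • Fmap N a x.1, hsub (hmaps t ht x.1 x.2)⟩ : cB))
        (hcontr t ht) : cB).1
    else A with hsoldef
  have hsol_eq : ∀ t (ht : t ∈ Set.Icc (0:ℝ) δv), sol t = (ContractingWith.fixedPoint
      (fun x : cB => (⟨A + t • Fmap N a x.1, hsub (hmaps t ht x.1 x.2)⟩ : cB))
      (hcontr t ht) : cB).1 := by
    intro t ht; rw [hsoldef]; dsimp only; rw [dif_pos ht]
  have hsol_cb : ∀ t, sol t ∈ cB := by
    intro t
    rw [hsoldef]; dsimp only; split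
    · exact Subtype.coe_prop _
    · exact Metric.mem_closedBall_self zero_le_one
  have hsol_fix : ∀ t, t ∈ Set.Icc (0:ℝ) δv → sol t = A + t • Fmap N a (sol t) := by
    intro t ht
    have h1 := (hcontr t ht).fixedPoint_isFixedPt
    rw [hsol_eq t ht]
    exact (congrArg Subtype.val h1).symm
  have hsol_unique : ∀ t (ht : t ∈ Set.Icc (0:ℝ) δv), ∀ v, v ∈ cB →
      v = A + t • Fmap N a v → v = sol t := by
    intro t ht v hv hfix
    have h1 : Function.IsFixedPt
        (fun x : cB => (⟨A + t • Fmap N a x.1, hsub (hmaps t ht x.1 x.2)⟩ : cB)) ⟨v, hv⟩ :=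
      Subtype.ext hfix.symm
    have h2 := (hcontr t ht).fixedPoint_unique h1
    rw [hsol_eq t ht]
    exact congrArg Subtype.val h2
  have hsol_mem : ∀ t, t ∈ Set.Icc (0:ℝ) δv → sol t ∈ Metric.closedBall A (5/16 : ℝ) := by
    intro t ht
    have h := hmaps t ht (sol t) (hsol_cb t)
    rw [← hsol_fix t ht] at h
    exact h
  clear_value sol
  -- translation between the scheme on ℕ → ℂ and the fixed point equation
  have hext_eq : ∀ (v : Fin N → ℂ) (c : ℕ → ℂ), c 0 = 0 → c (N+1) = 0 →
      (∀ k (h1 : 1 ≤ k) (h2 : k ≤ N), c k = v ⟨k-1, by omega⟩) →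
      ∀ k, k ≤ N + 1 → extv N v k = c k := by
    intro v c hc0 hcN hvk k hk
    by_cases h : 1 ≤ k ∧ k ≤ N
    · simp only [extv, dif_pos h]; exact (hvk k h.1 h.2).symm
    · simp only [extv, dif_neg h]
      have hk' : k = 0 ∨ k = N + 1 := by omega
      rcases hk' with h' | h'
      · rw [h', hc0]
      · rw [h', hcN]
  have hscheme_iff : ∀ (dt : ℝ) (v : Fin N → ℂ) (c : ℕ → ℂ), c 0 = 0 → c (N+1) = 0 →
      (∀ k (h1 : 1 ≤ k) (h2 : k ≤ N), c k = v ⟨k-1, by omega⟩) →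
      (massScheme N dt a c ↔ v = A + dt • Fmap N a v) := by
    intro dt v c hc0 hcN hvk
    have hev := hext_eq v c hc0 hcN hvk
    have key : ∀ (j : ℕ) (h1 : 1 ≤ j) (h2 : j ≤ N),
        (A + dt • Fmap N a v) ⟨j - 1, by omega⟩ =
        a j + (dt : ℂ) *
          (-Complex.I * ((((Complex.normSq (a j) + Complex.normSq (c j)) / 2 : ℝ) : ℂ))
              * ((a j + c j) / 2)
            + 2 * Complex.I * (starRingEnd ℂ) ((a j + c j) / 2)
              * (((a (j + 1) + c (j + 1)) / 2) ^ 2 + ((a (j - 1) + c (j - 1)) / 2) ^ 2)) := by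
      intro j h1 h2
      have e1 : j - 1 + 1 = j := by omega
      have e2 : j - 1 + 2 = j + 1 := by omega
      rw [Pi.add_apply, Pi.smul_apply]
      show A ⟨j - 1, by omega⟩ + dt • Tcomp (a (j-1)) (a (j-1+1)) (a (j-1+2))
        (extv N v (j-1)) (extv N v (j-1+1)) (extv N v (j-1+2)) = _
      rw [hA]
      simp only [Tcomp, e1, e2]
      rw [hev j (by omega), hev (j-1) (by omega), hev (j+1) (by omega), Complex.real_smul]
    constructor
    · intro hms
      funext i
      have hiN := i.2
      have h := hms ((i : ℕ) + 1) (Finset.mem_Icc.2 ⟨by omega, by omega⟩)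
      have hkey := key ((i:ℕ)+1) (by omega) (by omega)
      have hfin : (⟨(i:ℕ)+1-1, by omega⟩ : Fin N) = i := by ext; simp
      rw [hfin] at hkey
      have hvi : c ((i:ℕ)+1) = v i := by
        rw [hvk ((i:ℕ)+1) (by omega) (by omega)]
        congr 1
      rw [← hvi, h, ← hkey]
    · intro hfix j hj
      rw [Finset.mem_Icc] at hj
      have hkey := key j hj.1 hj.2
      rw [← hfix] at hkey
      exact (hvk j hj.1 hj.2).trans hkey
  -- continuous differentiability of `sol`
  have hsolC1 : ContDiffOn ℝ 1 sol (Set.Icc 0 δv) := by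
    intro t₀ ht₀
    have hb₀mem : sol t₀ ∈ Metric.closedBall A (5/16 : ℝ) := hsol_mem t₀ ht₀
    have hb₀ball : sol t₀ ∈ Metric.ball A 1 := by
      rw [Metric.mem_ball]
      rw [Metric.mem_closedBall] at hb₀mem
      linarith
    have hnbhd : cB ∈ 𝓝 (sol t₀) := Filter.mem_of_superset
      (Metric.isOpen_ball.mem_nhds hb₀ball) (by rw [hcB]; exact Metric.ball_subset_closedBall)
    have hFd : HasFDerivAt (Fmap N a) (fderiv ℝ (Fmap N a) (sol t₀)) (sol t₀) :=
      (((contDiff_Fmap N a).differentiable one_ne_zero) (sol t₀)).hasFDerivAt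
    set DF : (Fin N → ℂ) →L[ℝ] (Fin N → ℂ) := fderiv ℝ (Fmap N a) (sol t₀) with hDFdef
    have hlipOn : LipschitzOnWith (Real.toNNReal (8 * ρ^2)) (Fmap N a) cB := by
      apply LipschitzOnWith.of_dist_le_mul
      intro x hx y hy
      rw [dist_eq_norm, dist_eq_norm, Real.coe_toNNReal _ (by positivity)]
      exact hFlip x hx y hy
    have hDFle : ‖DF‖ ≤ 8 * ρ^2 := by
      have h := hFd.le_of_lipschitzOn hnbhd hlipOn
      rwa [Real.coe_toNNReal _ (by positivity)] at h
    have hsmall : ‖t₀ • DF‖ < 1 := by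
      have h0 : ‖t₀ • DF‖ ≤ t₀ * ‖DF‖ := by
        have h := ContinuousLinearMap.opNorm_smul_le t₀ DF
        rwa [Real.norm_eq_abs, _root_.abs_of_nonneg ht₀.1] at h
      have h1 : t₀ * ‖DF‖ ≤ δv * (8*ρ^2) :=
        mul_le_mul ht₀.2 hDFle (norm_nonneg _) hδpos.le
      have h2 : ρ^2 ≤ ρ^3 := by nlinarith
      have h3 : (16*δv)*ρ^2 ≤ (16*δv)*ρ^3 := mul_le_mul_of_nonneg_left h2 (by linarith)
      nlinarith [hδρ, h3]
    set u : ((Fin N → ℂ) →L[ℝ] (Fin N → ℂ))ˣ := Units.oneSub (t₀ • DF) hsmall with hu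
    set fstL := ContinuousLinearMap.fst ℝ ℝ (Fin N → ℂ) with hfstL
    set sndL := ContinuousLinearMap.snd ℝ ℝ (Fin N → ℂ) with hsndL
    set Fb : Fin N → ℂ := Fmap N a (sol t₀) with hFbdef
    have hkey1 : ∀ z, (↑u⁻¹ : (Fin N → ℂ) →L[ℝ] (Fin N → ℂ))
        ((↑u : (Fin N → ℂ) →L[ℝ] (Fin N → ℂ)) z) = z := by
      intro z
      rw [← ContinuousLinearMap.mul_apply, u.inv_mul, ContinuousLinearMap.one_apply]
    have hkey2 : ∀ z, (↑u : (Fin N → ℂ) →L[ℝ] (Fin N → ℂ))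
        ((↑u⁻¹ : (Fin N → ℂ) →L[ℝ] (Fin N → ℂ)) z) = z := by
      intro z
      rw [← ContinuousLinearMap.mul_apply, u.mul_inv, ContinuousLinearMap.one_apply]
    set L : (ℝ × (Fin N → ℂ)) ≃L[ℝ] (ℝ × (Fin N → ℂ)) :=
      ContinuousLinearEquiv.equivOfInverse
        (fstL.prod (((↑u : (Fin N → ℂ) →L[ℝ] (Fin N → ℂ)).comp sndL) - fstL.smulRight Fb))
        (fstL.prod (((↑u⁻¹ : (Fin N → ℂ) →L[ℝ] (Fin N → ℂ))).comp (sndL + fstL.smulRight Fb)))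
        (fun p => by
          refine Prod.ext ?_ ?_
          · rfl
          · show (↑u⁻¹ : (Fin N → ℂ) →L[ℝ] (Fin N → ℂ))
              (((↑u : (Fin N → ℂ) →L[ℝ] (Fin N → ℂ)) p.2 - p.1 • Fb) + p.1 • Fb) = p.2
            rw [sub_add_cancel, hkey1])
        (fun p => by
          refine Prod.ext ?_ ?_
          · rfl
          · show (↑u : (Fin N → ℂ) →L[ℝ] (Fin N → ℂ))
              ((↑u⁻¹ : (Fin N → ℂ) →L[ℝ] (Fin N → ℂ)) (p.2 + p.1 • Fb)) - p.1 • Fb = p.2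
            rw [hkey2, add_sub_cancel_right])
      with hLdef
    have hGc : ContDiffAt ℝ 1
        (fun p : ℝ × (Fin N → ℂ) => (p.1, p.2 - (A + p.1 • Fmap N a p.2))) (t₀, sol t₀) :=
      (contDiff_fst.prodMk (contDiff_snd.sub (contDiff_const.add
        (contDiff_fst.smul ((contDiff_Fmap N a).comp contDiff_snd))))).contDiffAt
    have hGd : HasFDerivAt (fun p : ℝ × (Fin N → ℂ) => (p.1, p.2 - (A + p.1 • Fmap N a p.2)))
        (L : (ℝ × (Fin N → ℂ)) →L[ℝ] (ℝ × (Fin N → ℂ))) (t₀, sol t₀) := by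
      have hs : HasFDerivAt (fun p : ℝ × (Fin N → ℂ) => p.1 • Fmap N a p.2)
          (t₀ • (DF.comp sndL) + fstL.smulRight Fb) (t₀, sol t₀) := by
        have hc : HasFDerivAt (fun p : ℝ × (Fin N → ℂ) => Fmap N a p.2) (DF.comp sndL)
            (t₀, sol t₀) := HasFDerivAt.comp (f := Prod.snd) (t₀, sol t₀) hFd hasFDerivAt_snd
        exact (hasFDerivAt_fst (𝕜 := ℝ) (p := ((t₀, sol t₀) : ℝ × (Fin N → ℂ)))).smul hc
      have h2 : HasFDerivAt (fun p : ℝ × (Fin N → ℂ) => p.2 - (A + p.1 • Fmap N a p.2))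
          (sndL - (t₀ • (DF.comp sndL) + fstL.smulRight Fb)) (t₀, sol t₀) :=
        hasFDerivAt_snd.sub (hs.const_add A)
      have hLeq : (L : (ℝ × (Fin N → ℂ)) →L[ℝ] (ℝ × (Fin N → ℂ)))
          = fstL.prod (sndL - (t₀ • (DF.comp sndL) + fstL.smulRight Fb)) := by
        apply ContinuousLinearMap.ext
        intro p
        refine Prod.ext ?_ ?_
        · rfl
        · show (↑u : (Fin N → ℂ) →L[ℝ] (Fin N → ℂ)) p.2 - p.1 • Fb
            = p.2 - (t₀ • DF p.2 + p.1 • Fb)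
          rw [hu, Units.val_oneSub]
          simp only [ContinuousLinearMap.sub_apply, ContinuousLinearMap.one_apply,
            ContinuousLinearMap.smul_apply]
          abel
      rw [hLeq]
      exact hasFDerivAt_fst.prodMk h2
    have hstrict := hGc.hasStrictFDerivAt' hGd one_ne_zero
    have hzero : sol t₀ - (A + t₀ • Fmap N a (sol t₀)) = 0 := by
      rw [← hsol_fix t₀ ht₀, sub_self]
    have hHc : ContDiffAt ℝ 1 (hGc.localInverse hGd one_ne_zero) ((t₀ : ℝ), (0 : Fin N → ℂ)) := by
      have h := hGc.to_localInverse (f' := L) hGd one_ne_zero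
      simp only [hzero] at h
      exact h
    have hright : ∀ᶠ p in 𝓝 ((t₀ : ℝ), (0 : Fin N → ℂ)),
        (fun p : ℝ × (Fin N → ℂ) => (p.1, p.2 - (A + p.1 • Fmap N a p.2)))
          (hGc.localInverse hGd one_ne_zero p) = p := by
      have h := hstrict.eventually_right_inverse
      simp only [hzero] at h
      exact h
    have hHpt : hGc.localInverse hGd one_ne_zero ((t₀ : ℝ), (0 : Fin N → ℂ)) = (t₀, sol t₀) := by
      have h := hstrict.localInverse_apply_image
      simp only [hzero] at h
      exact h
    have htend : Filter.Tendsto (fun t : ℝ => ((t, (0 : Fin N → ℂ)) : ℝ × (Fin N → ℂ)))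
        (𝓝 t₀) (𝓝 ((t₀ : ℝ), (0 : Fin N → ℂ))) :=
      ((continuous_id.prodMk continuous_const).tendsto t₀)
    have hgC : ContDiffAt ℝ 1 (fun t : ℝ => (hGc.localInverse hGd one_ne_zero (t, 0)).2) t₀ := by
      have h1 : ContDiffAt ℝ 1 (fun t : ℝ => ((t, (0 : Fin N → ℂ)) : ℝ × (Fin N → ℂ))) t₀ :=
        (contDiff_id.prodMk contDiff_const).contDiffAt
      exact contDiff_snd.contDiffAt.comp t₀ (hHc.comp t₀ h1)
    have hg0 : (hGc.localInverse hGd one_ne_zero ((t₀ : ℝ), (0 : Fin N → ℂ))).2 = sol t₀ := by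
      rw [hHpt]
    have hev1 : ∀ᶠ t in 𝓝 t₀,
        (fun p : ℝ × (Fin N → ℂ) => (p.1, p.2 - (A + p.1 • Fmap N a p.2)))
          (hGc.localInverse hGd one_ne_zero (t, 0)) = (t, 0) := htend.eventually hright
    have hev2 : ∀ᶠ t in 𝓝 t₀, (hGc.localInverse hGd one_ne_zero (t, 0)).2 ∈ cB := by
      have h := hgC.continuousAt
      rw [ContinuousAt] at h
      simp only [hg0] at h
      exact h.eventually_mem hnbhd
    have hevEq : ∀ᶠ t in 𝓝 t₀, t ∈ Set.Icc (0:ℝ) δv →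
        sol t = (hGc.localInverse hGd one_ne_zero (t, 0)).2 := by
      filter_upwards [hev1, hev2] with t h1 h2 ht
      simp only [Prod.mk.injEq] at h1
      obtain ⟨hfst, hsnd⟩ := h1
      rw [hfst] at hsnd
      have hfx : (hGc.localInverse hGd one_ne_zero (t, 0)).2
          = A + t • Fmap N a (hGc.localInverse hGd one_ne_zero (t, 0)).2 := sub_eq_zero.1 hsnd
      exact (hsol_unique t ht _ h2 hfx).symm
    have hmemIcc : sol =ᶠ[𝓝[Set.Icc (0:ℝ) δv] t₀]
        (fun t : ℝ => (hGc.localInverse hGd one_ne_zero (t, 0)).2) := by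
      have h5 : ∀ᶠ t in 𝓝[Set.Icc (0:ℝ) δv] t₀, t ∈ Set.Icc (0:ℝ) δv :=
        eventually_mem_nhdsWithin
      have h6 := hevEq.filter_mono (nhdsWithin_le_nhds (s := Set.Icc (0:ℝ) δv))
      filter_upwards [h5, h6] with t h7 h8 using h8 h7
    exact (hgC.contDiffWithinAt).congr_of_eventuallyEq hmemIcc hg0.symm
  -- the solution map
  set B : ℝ → ℕ → ℂ := fun dt j =>
    if h : 1 ≤ j ∧ j ≤ N then sol dt ⟨j - 1, by omega⟩
    else if j = 0 ∨ j = N + 1 then 0 else a j with hB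
  have hB_sol : ∀ dt k (h1 : 1 ≤ k) (h2 : k ≤ N), B dt k = sol dt ⟨k-1, by omega⟩ := by
    intro dt k h1 h2; rw [hB]; dsimp only; rw [dif_pos ⟨h1, h2⟩]
  have hB0 : ∀ dt : ℝ, B dt 0 = 0 ∧ B dt (N+1) = 0 := by
    intro dt
    constructor
    · rw [hB]; dsimp only; rw [dif_neg (by omega), if_pos (Or.inl rfl)]
    · rw [hB]; dsimp only; rw [dif_neg (by omega), if_pos (Or.inr rfl)]
  have h0mem : (0:ℝ) ∈ Set.Icc (0:ℝ) δv := ⟨le_refl _, hδpos.le⟩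
  have hsol0 : sol 0 = A := by
    refine (hsol_unique 0 h0mem A (Metric.mem_closedBall_self zero_le_one) ?_).symm
    simp
  refine ⟨B, hB0, ?_, ?_, ?_, ?_⟩
  · -- B 0 = a
    intro j
    by_cases h : 1 ≤ j ∧ j ≤ N
    · rw [hB_sol 0 j h.1 h.2, hsol0, hA]
      show a (j - 1 + 1) = a j
      congr 1
      omega
    · rw [hB]; dsimp only; rw [dif_neg h]
      split
      · next h' =>
        rcases h' with h' | h'
        · rw [h', ha0]
        · rw [h', haN]
      · rfl
  · -- smoothness
    intro j hj
    rw [Finset.mem_Icc] at hj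
    have hfun : (fun dt : ℝ => B dt j) = fun dt : ℝ => sol dt ⟨j-1, by omega⟩ :=
      funext fun dt => hB_sol dt j hj.1 hj.2
    rw [hfun]
    exact (ContinuousLinearMap.proj (R := ℝ) (φ := fun _ : Fin N => ℂ)
      (⟨j-1, by omega⟩ : Fin N)).contDiff.comp_contDiffOn hsolC1
  · -- the scheme holds
    intro dt hdt
    exact (hscheme_iff dt (sol dt) (B dt) (hB0 dt).1 (hB0 dt).2
      (fun k h1 h2 => hB_sol dt k h1 h2)).2 (hsol_fix dt hdt)
  · -- local uniqueness
    intro dt hdt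
    refine ⟨1/4, by norm_num, ?_⟩
    intro b' hb'0 hb'N hms hl2b j hj
    rw [Finset.mem_Icc] at hj
    set v' : Fin N → ℂ := fun i => b' ((i:ℕ)+1) with hv'
    have hv'k : ∀ k (h1 : 1 ≤ k) (h2 : k ≤ N), b' k = v' ⟨k-1, by omega⟩ := by
      intro k h1 h2; rw [hv']; dsimp only; congr 1; omega
    have hfix' : v' = A + dt • Fmap N a v' :=
      (hscheme_iff dt v' b' hb'0 hb'N hv'k).1 hms
    have hv'cb : v' ∈ cB := by
      rw [hcB, Metric.mem_closedBall, dist_eq_norm]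
      have h1 : ‖v' - sol dt‖ ≤ 1/4 := by
        rw [pi_norm_le_iff_of_nonneg (by norm_num)]
        intro i
        have hiN := i.2
        have hfi : (⟨(i:ℕ)+1-1, by omega⟩ : Fin N) = i := by ext; simp
        have heq : (v' - sol dt) i = (b' - B dt) ((i:ℕ)+1) := by
          rw [Pi.sub_apply, Pi.sub_apply, hB_sol dt ((i:ℕ)+1) (by omega) (by omega), hfi, hv']
        calc ‖(v' - sol dt) i‖ = ‖(b' - B dt) ((i:ℕ)+1)‖ := by rw [heq]
          _ ≤ l2norm N (b' - B dt) := hl2 _ _ (by omega) (by omega)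
          _ ≤ 1/4 := le_of_lt hl2b
      have h2 : ‖sol dt - A‖ ≤ 5/16 := by
        have h := hsol_mem dt hdt
        rw [Metric.mem_closedBall, dist_eq_norm] at h
        exact h
      calc ‖v' - A‖ = ‖(v' - sol dt) + (sol dt - A)‖ := by rw [sub_add_sub_cancel]
        _ ≤ ‖v' - sol dt‖ + ‖sol dt - A‖ := norm_add_le _ _
        _ ≤ 1 := by linarith
    have hv's := hsol_unique dt hdt v' hv'cb hfix'
    rw [hv'k j hj.1 hj.2, hv's, hB_sol dt j hj.1 hj.2]
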